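/- For 1 ≤ i ≤ ⌊n/2⌋ with ℓ_i := n/gcd(n,i) ≥ 2 and n ≥ 2, the chromatic polynomial of C_n(i) evaluated at n satisfies P_i(n)/n^n ≤ exp( −1 + n/(ℓ_i (n−1)^{ℓ_i − 1}) ). -/

import Mathlib

/-- The `n`-cyclic absolute value of `d ∈ ℤ_n`. -/
def cycAbs (n : ℕ) (d : ZMod n) : ℕ := min d.val (-d).val

/-- The circulant graph `C_n(i)` on vertex set `ℤ_n`: `r ~ s` iff `|r − s|_n = i`. -/
def circulant (n i : ℕ) : SimpleGraph (ZMod n) :=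
  SimpleGraph.fromRel (fun r s => cycAbs n (r - s) = i)

/-- The chromatic polynomial of `C_n(i)` evaluated at `x`: the number of proper colorings
of `C_n(i)` with `x` colors. -/
noncomputable def Pchrom (n i x : ℕ) : ℕ :=
  Nat.card {c : ZMod n → Fin x // ∀ u v : ZMod n, (circulant n i).Adj u v → c u ≠ c v}



private lemma card_neq (x : ℕ) (c : Fin x) : Fintype.card {y : Fin x // y ≠ c} = x - 1 := by
  simp [Fintype.card_subtype_compl]

private lemma card_path (x m : ℕ) :
    Nat.card {e : Fin (m+1) → Fin x // ∀ k : Fin m, e k.castSucc ≠ e k.succ}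
      = x * (x-1)^m := by
  induction m with
  | zero =>
      have E : {e : Fin 1 → Fin x // ∀ k : Fin 0, e k.castSucc ≠ e k.succ} ≃ Fin x :=
        (Equiv.subtypeUnivEquiv (fun e k => k.elim0)).trans (Equiv.funUnique (Fin 1) (Fin x))
      rw [Nat.card_congr E]
      simp
  | succ m ih =>
      have E : {e : Fin (m+2) → Fin x // ∀ k : Fin (m+1), e k.castSucc ≠ e k.succ}
          ≃ Σ f : {e : Fin (m+1) → Fin x // ∀ k : Fin m, e k.castSucc ≠ e k.succ},
              {y : Fin x // y ≠ f.1 (Fin.last m)} :=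
      { toFun := fun e => ⟨⟨Fin.init e.1, fun k => by
            have h := e.2 k.castSucc
            rw [Fin.succ_castSucc] at h
            simpa [Fin.init] using h⟩,
          e.1 (Fin.last (m+1)), by
            have h := e.2 (Fin.last m)
            rw [Fin.succ_last] at h
            simpa [Fin.init] using h.symm⟩
        invFun := fun p => ⟨Fin.snoc p.1.1 p.2.1, by
            intro k
            induction k using Fin.lastCases with
            | last =>
                rw [Fin.succ_last, Fin.snoc_castSucc, Fin.snoc_last]
                exact fun h => p.2.2 h.symm
            | cast j =>
                rw [Fin.succ_castSucc, Fin.snoc_castSucc, Fin.snoc_castSucc]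
                exact p.1.2 j⟩
        left_inv := fun e => Subtype.ext (Fin.snoc_init_self e.1)
        right_inv := fun p => by
            obtain ⟨⟨f, hf⟩, y, hy⟩ := p
            dsimp only
            refine Sigma.ext (Subtype.ext (funext fun k => ?_)) ?_
            · simp [Fin.init]
            · rw [Subtype.heq_iff_coe_eq]
              · simp
              · intro z
                simp [Fin.init] }
      rw [Nat.card_congr E, Nat.card_eq_fintype_card, Fintype.card_sigma]
      simp only [card_neq]
      rw [Finset.sum_const, Finset.card_univ, smul_eq_mul, ← Nat.card_eq_fintype_card, ih]
      ring


private lemma zmod_val_add_one {m : ℕ} [NeZero m] (j : ZMod m) :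
    (j + 1).val = (j.val + 1) % m := by
  rcases eq_or_lt_of_le (Nat.one_le_iff_ne_zero.mpr (NeZero.ne m)) with h | h
  · have hm : m = 1 := h.symm
    subst hm
    have h1 := ZMod.val_lt (j + 1)
    have h2 := ZMod.val_lt j
    omega
  · haveI : Fact (1 < m) := ⟨h⟩
    rw [ZMod.val_add, ZMod.val_one]

private lemma cyc_recur (x m : ℕ) (hm : 1 ≤ m) :
    Nat.card {e : ZMod (m+1) → Fin x // ∀ j, e j ≠ e (j+1)}
      + Nat.card {e : ZMod m → Fin x // ∀ j, e j ≠ e (j+1)}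
      = Nat.card {e : Fin (m+1) → Fin x // ∀ k : Fin m, e k.castSucc ≠ e k.succ} := by
  haveI : NeZero m := ⟨by omega⟩
  classical
  set B := {e : Fin (m+1) → Fin x // ∀ k : Fin m, e k.castSucc ≠ e k.succ} with hB
  have E1 : {e : ZMod (m+1) → Fin x // ∀ j, e j ≠ e (j+1)}
      ≃ {w : B // w.1 (Fin.last m) ≠ w.1 0} :=
    { toFun := fun e => ⟨⟨fun k => e.1 ((k.val : ℕ) : ZMod (m+1)), by
        intro k
        have h := e.2 ((k.val : ℕ) : ZMod (m+1))
        have h1 : ((k.val : ℕ) : ZMod (m+1)) + 1 = ((k.val + 1 : ℕ) : ZMod (m+1)) := by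
          push_cast; ring
        rw [h1] at h
        simpa using h⟩, by
        have h := e.2 ((m : ℕ) : ZMod (m+1))
        have h1 : ((m : ℕ) : ZMod (m+1)) + 1 = ((0 : ℕ) : ZMod (m+1)) := by
          have h2 : ((m + 1 : ℕ) : ZMod (m+1)) = 0 := ZMod.natCast_self _
          push_cast at h2 ⊢
          linear_combination h2
        rw [h1] at h
        simpa using h⟩
      invFun := fun w => ⟨fun j => w.1.1 ⟨j.val, ZMod.val_lt j⟩, by
        intro j
        have hv := zmod_val_add_one j
        by_cases hj : j.val < m
        · have hv' : (j + 1).val = j.val + 1 := by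
            rw [hv]; exact Nat.mod_eq_of_lt (by omega)
          simp only [hv']
          exact w.1.2 ⟨j.val, hj⟩
        · have hjm : j.val = m := by have := ZMod.val_lt j; omega
          have hv' : (j + 1).val = 0 := by rw [hv, hjm]; simp
          simp only [hv', hjm]
          exact w.2⟩
      left_inv := fun e => Subtype.ext (funext fun j =>
        congrArg e.1 (ZMod.natCast_rightInverse j))
      right_inv := fun w => Subtype.ext (Subtype.ext (funext fun k => by
        exact congrArg w.1.1 (Fin.ext (ZMod.val_cast_of_lt k.isLt))))}
  have E2 : {e : ZMod m → Fin x // ∀ j, e j ≠ e (j+1)}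
      ≃ {w : B // ¬ w.1 (Fin.last m) ≠ w.1 0} :=
    { toFun := fun e => ⟨⟨fun k => e.1 ((k.val : ℕ) : ZMod m), by
        intro k
        have h := e.2 ((k.val : ℕ) : ZMod m)
        have h1 : ((k.val : ℕ) : ZMod m) + 1 = ((k.val + 1 : ℕ) : ZMod m) := by
          push_cast; ring
        rw [h1] at h
        simpa using h⟩, by
        intro hq
        exact hq (by simp [ZMod.natCast_self])⟩
      invFun := fun w => ⟨fun j => w.1.1 ⟨j.val, Nat.lt_succ_of_lt (ZMod.val_lt j)⟩, by
        intro j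
        have hv := zmod_val_add_one j
        by_cases hj : j.val + 1 < m
        · have hv' : (j + 1).val = j.val + 1 := by
            rw [hv]; exact Nat.mod_eq_of_lt hj
          simp only [hv']
          exact w.1.2 ⟨j.val, ZMod.val_lt j⟩
        · have hjm : j.val + 1 = m := by have := ZMod.val_lt j; omega
          have hv' : (j + 1).val = 0 := by rw [hv, hjm]; simp
          have h := w.1.2 ⟨j.val, ZMod.val_lt j⟩
          have weq : w.1.1 (Fin.last m) = w.1.1 0 := not_not.mp w.2
          simp only [hv']
          intro hEq
          apply h
          show w.1.1 _ = w.1.1 ⟨j.val + 1, _⟩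
          simp only [hjm]
          exact hEq.trans weq.symm⟩
      left_inv := fun e => Subtype.ext (funext fun j =>
        congrArg e.1 (ZMod.natCast_rightInverse j))
      right_inv := fun w => Subtype.ext (Subtype.ext (funext fun k => by
        by_cases hk : k.val < m
        · exact congrArg w.1.1 (Fin.ext (by
            show ((k.val : ZMod m)).val = k.val
            rw [ZMod.val_cast_of_lt hk]))
        · have hkm : k.val = m := by have := k.isLt; omega
          have weq : w.1.1 (Fin.last m) = w.1.1 0 := not_not.mp w.2
          have h0 : ((k.val : ℕ) : ZMod m).val = 0 := by
            rw [hkm]; simp [ZMod.natCast_self]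
          have hk' : k = Fin.last m := Fin.ext hkm
          calc w.1.1 ⟨((k.val : ℕ) : ZMod m).val, _⟩
              = w.1.1 ⟨0, Nat.succ_pos m⟩ := by
                exact congrArg w.1.1 (Fin.ext h0)
            _ = w.1.1 0 := rfl
            _ = w.1.1 (Fin.last m) := weq.symm
            _ = w.1.1 k := by rw [hk']))}
  haveI : Finite {e : ZMod (m+1) → Fin x // ∀ j, e j ≠ e (j+1)} := Subtype.finite
  haveI : Finite {e : ZMod m → Fin x // ∀ j, e j ≠ e (j+1)} := Subtype.finite
  rw [← Nat.card_sum]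
  exact Nat.card_congr ((Equiv.sumCongr E1 E2).trans (Equiv.sumCompl _))

private lemma card_cyc (x m : ℕ) (hx : 1 ≤ x) (hm : 1 ≤ m) :
    (Nat.card {e : ZMod m → Fin x // ∀ j, e j ≠ e (j+1)} : ℤ)
      = ((x:ℤ)-1)^m + (-1)^m * ((x:ℤ)-1) := by
  induction m, hm using Nat.le_induction with
  | base =>
      haveI : IsEmpty {e : ZMod 1 → Fin x // ∀ j, e j ≠ e (j+1)} :=
        ⟨fun e => e.2 0 (congrArg e.1 (Subsingleton.elim _ _))⟩
      rw [Nat.card_of_isEmpty]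
      push_cast
      ring
  | succ m hm ih =>
      have hrec := cyc_recur x m hm
      rw [card_path x m] at hrec
      have hcast : (Nat.card {e : ZMod (m+1) → Fin x // ∀ j, e j ≠ e (j+1)} : ℤ)
          + (Nat.card {e : ZMod m → Fin x // ∀ j, e j ≠ e (j+1)} : ℤ)
          = (x : ℤ) * ((x:ℤ)-1)^m := by
        have h := congrArg (fun t : ℕ => (t : ℤ)) hrec
        push_cast [hx] at h
        linarith [h]
      rw [ih] at hcast
      have : (Nat.card {e : ZMod (m+1) → Fin x // ∀ j, e j ≠ e (j+1)} : ℤ)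
          = (x : ℤ) * ((x:ℤ)-1)^m - (((x:ℤ)-1)^m + (-1)^m * ((x:ℤ)-1)) := by linarith
      rw [this]
      ring

private lemma pchrom_colorings (n i x : ℕ) [NeZero n] (hn : 2 ≤ n) (hi1 : 1 ≤ i)
    (hi2 : i ≤ n / 2) :
    Pchrom n i x = Nat.card {c : ZMod n → Fin x // ∀ v, c v ≠ c (v + (i : ZMod n))} := by
  have hi_lt : i < n := lt_of_le_of_lt hi2 (Nat.div_lt_self (by omega) one_lt_two)
  have hval : ((i : ℕ) : ZMod n).val = i := ZMod.val_cast_of_lt hi_lt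
  have hne0 : ((i : ℕ) : ZMod n) ≠ 0 := by
    intro h
    rw [h, ZMod.val_zero] at hval
    omega
  have hnegval : (-((i : ℕ) : ZMod n)).val = n - i := by
    rw [ZMod.neg_val]
    simp [hne0, hval]
  have key : ∀ d : ZMod n, cycAbs n d = i → d = ((i:ℕ) : ZMod n) ∨ d = -((i:ℕ) : ZMod n) := by
    intro d h
    unfold cycAbs at h
    rcases le_total d.val (-d).val with hle | hle
    · rw [min_eq_left hle] at h
      left
      exact ZMod.val_injective n (by rw [h, hval])
    · rw [min_eq_right hle] at h
      right
      have : -d = ((i:ℕ) : ZMod n) := ZMod.val_injective n (by rw [h, hval])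
      rw [← this, neg_neg]
  have hiff : ∀ c : ZMod n → Fin x,
      (∀ u v, (circulant n i).Adj u v → c u ≠ c v) ↔ (∀ v, c v ≠ c (v + ((i:ℕ) : ZMod n))) := by
    intro c
    constructor
    · intro h v
      refine (h (v + ((i:ℕ) : ZMod n)) v ?_).symm
      rw [circulant, SimpleGraph.fromRel_adj]
      constructor
      · intro hEq
        exact hne0 (by simpa using hEq)
      · left
        rw [add_sub_cancel_left]
        unfold cycAbs
        rw [hval, hnegval]
        exact Nat.min_eq_left (by omega)
    · intro h u v hadj
      rw [circulant, SimpleGraph.fromRel_adj] at hadj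
      obtain ⟨hne, hR⟩ := hadj
      have hd : u - v = ((i:ℕ) : ZMod n) ∨ u - v = -((i:ℕ) : ZMod n) := by
        rcases hR with hR | hR
        · exact key _ hR
        · rcases key _ hR with h1 | h1
          · right; linear_combination -h1
          · left; linear_combination -h1
      rcases hd with h1 | h1
      · have hu : u = v + ((i:ℕ) : ZMod n) := by linear_combination h1
        rw [hu]
        exact (h v).symm
      · have hv : v = u + ((i:ℕ) : ZMod n) := by linear_combination -h1
        rw [hv]
        exact h u
  unfold Pchrom
  exact Nat.card_congr (Equiv.subtypeEquivRight hiff)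

private lemma pchrom_eq (n i x : ℕ) [NeZero n] (hn : 2 ≤ n) (hi1 : 1 ≤ i)
    (hi2 : i ≤ n / 2) (hl : 2 ≤ n / Nat.gcd n i) :
    Pchrom n i x
      = (Nat.card {e : ZMod (n / Nat.gcd n i) → Fin x // ∀ j, e j ≠ e (j+1)}) ^ (Nat.gcd n i) := by
  set g := Nat.gcd n i with hgdef
  set ℓ := n / g with hldef
  haveI : NeZero ℓ := ⟨by omega⟩
  have hgdvd : g ∣ n := Nat.gcd_dvd_left n i
  have hgi : g ∣ i := Nat.gcd_dvd_right n i
  have hgl : g * ℓ = n := Nat.mul_div_cancel' hgdvd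
  have horder : addOrderOf ((i : ℕ) : ZMod n) = ℓ := ZMod.addOrderOf_coe i (NeZero.ne n)
  have hnli : n ∣ ℓ * i := by
    obtain ⟨t, ht⟩ := hgi
    exact ⟨t, by rw [ht, ← hgl]; ring⟩
  have hcast : ∀ a b : ℕ, a ≡ b [MOD ℓ] → ((a * i : ℕ) : ZMod n) = ((b * i : ℕ) : ZMod n) := by
    intro a b hab
    rw [ZMod.natCast_eq_natCast_iff]
    exact Nat.ModEq.of_dvd hnli (hab.mul_right' i)
  set φ : Fin g × ZMod ℓ → ZMod n := fun p => ((p.1.1 + p.2.val * i : ℕ) : ZMod n) with hφ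
  have hinj : Function.Injective φ := by
    rintro ⟨r, j⟩ ⟨r', j'⟩ h
    simp only [hφ] at h
    rw [ZMod.natCast_eq_natCast_iff] at h
    have e1 : j.val * i ≡ 0 [MOD g] := Nat.modEq_zero_iff_dvd.2 (hgi.mul_left j.val)
    have e2 : j'.val * i ≡ 0 [MOD g] := Nat.modEq_zero_iff_dvd.2 (hgi.mul_left j'.val)
    have hmodg := Nat.ModEq.of_dvd hgdvd h
    have hr : r.1 = r'.1 := by
      have c1 : r.1 + j.val * i ≡ r.1 + 0 [MOD g] := (Nat.ModEq.refl r.1).add e1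
      have c2 : r'.1 + j'.val * i ≡ r'.1 + 0 [MOD g] := (Nat.ModEq.refl r'.1).add e2
      rw [Nat.add_zero] at c1 c2
      exact Nat.ModEq.eq_of_lt_of_lt ((c1.symm.trans hmodg).trans c2) r.2 r'.2
    rw [hr] at h
    have hji := Nat.ModEq.add_left_cancel' r'.1 h
    rw [← ZMod.natCast_eq_natCast_iff] at hji
    have hsm : j.val • ((i:ℕ) : ZMod n) = j'.val • ((i:ℕ) : ZMod n) := by
      push_cast at hji
      rw [nsmul_eq_mul, nsmul_eq_mul]
      exact_mod_cast hji
    have hjj : j.val = j'.val := by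
      refine nsmul_injOn_Iio_addOrderOf ?_ ?_ hsm
      · rw [horder]; exact ZMod.val_lt j
      · rw [horder]; exact ZMod.val_lt j'
    exact Prod.ext (Fin.ext hr) (ZMod.val_injective ℓ hjj)
  have hbij : Function.Bijective φ := by
    refine (Fintype.bijective_iff_injective_and_card φ).2 ⟨hinj, ?_⟩
    simp [ZMod.card, hgl]
  have hstep : ∀ (r : Fin g) (j : ZMod ℓ),
      φ (r, j) + ((i:ℕ) : ZMod n) = φ (r, j + 1) := by
    intro r j
    have hmod : (j+1).val ≡ j.val + 1 [MOD ℓ] := by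
      rw [zmod_val_add_one]
      exact Nat.mod_modEq _ _
    have h2 := hcast ((j+1).val) (j.val + 1) hmod
    simp only [hφ]
    push_cast at h2 ⊢
    linear_combination -h2
  let F : (ZMod n → Fin x) ≃ (Fin g → ZMod ℓ → Fin x) :=
    (Equiv.arrowCongr (Equiv.ofBijective φ hbij).symm (Equiv.refl _)).trans
      (Equiv.curry _ _ _)
  have hF : ∀ (c : ZMod n → Fin x) (r : Fin g) (j : ZMod ℓ), F c r j = c (φ (r, j)) :=
    fun c r j => rfl
  have E : {c : ZMod n → Fin x // ∀ v, c v ≠ c (v + ((i:ℕ) : ZMod n))}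
      ≃ {d : Fin g → ZMod ℓ → Fin x // ∀ r, ∀ j, d r j ≠ d r (j + 1)} := by
    refine Equiv.subtypeEquiv F (fun c => ?_)
    simp only [hF]
    constructor
    · intro h r j
      rw [← hstep r j]
      exact h _
    · intro h v
      obtain ⟨⟨r, j⟩, rfl⟩ := hbij.2 v
      rw [hstep]
      exact h r j
  rw [pchrom_colorings n i x hn hi1 hi2, Nat.card_congr E,
    Nat.card_congr (Equiv.subtypePiEquivPi
      (p := fun (_ : Fin g) (e : ZMod ℓ → Fin x) => ∀ j, e j ≠ e (j + 1))),
    Nat.card_pi]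
  simp

/-- For `1 ≤ i ≤ ⌊n/2⌋` with `ℓ_i = n / gcd(n,i) ≥ 2` and `n ≥ 2`,
`P_i(n)/n^n ≤ exp(−1 + n/(ℓ_i (n−1)^{ℓ_i − 1}))`. -/
theorem chromatic_ratio_upper_bound (n i : ℕ) [NeZero n] (hn : 2 ≤ n)
    (hi1 : 1 ≤ i) (hi2 : i ≤ n / 2) (hl : 2 ≤ n / Nat.gcd n i) :
    (Pchrom n i n : ℝ) / (n : ℝ) ^ n
      ≤ Real.exp (-1 + (n : ℝ) /
          ((n / Nat.gcd n i : ℕ) * ((n : ℝ) - 1) ^ (n / Nat.gcd n i - 1))) := by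
  set g := Nat.gcd n i with hgdef
  set ℓ := n / g with hldef
  have hgdvd : g ∣ n := Nat.gcd_dvd_left n i
  have hgl : g * ℓ = n := Nat.mul_div_cancel' hgdvd
  have hgpos : 0 < g := by
    rcases Nat.eq_zero_or_pos g with h | h
    · rw [h, zero_mul] at hgl; omega
    · exact h
  set C := Nat.card {e : ZMod ℓ → Fin n // ∀ j, e j ≠ e (j+1)} with hC
  have hP : Pchrom n i n = C ^ g := pchrom_eq n i n hn hi1 hi2 hl
  have hCval : (C : ℤ) = ((n:ℤ)-1)^ℓ + (-1)^ℓ * ((n:ℤ)-1) :=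
    card_cyc n ℓ (le_trans one_le_two hn) (le_trans one_le_two hl)
  have hCr : (C : ℝ) = ((n:ℝ)-1)^ℓ + (-1)^ℓ * ((n:ℝ)-1) := by exact_mod_cast hCval
  set a : ℝ := (n:ℝ) - 1 with ha
  have hn2 : (2:ℝ) ≤ (n:ℝ) := by exact_mod_cast hn
  have ha1 : 1 ≤ a := by rw [ha]; linarith
  have hapos : 0 < a := by linarith
  set t : ℝ := (a ^ (ℓ - 1))⁻¹ with ht
  have htpos : 0 < t := by positivity
  have hat : a ^ ℓ * t = a := by
    have h1 : a ^ ℓ = a ^ (ℓ-1) * a := by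
      rw [← pow_succ]
      congr 1
      exact (Nat.succ_pred_eq_of_pos (lt_of_lt_of_le two_pos hl)).symm
    rw [h1, ht]
    field_simp
  have hCle : (C:ℝ) ≤ a ^ ℓ * (1 + t) := by
    rw [hCr]
    have h1 : (-1:ℝ)^ℓ * a ≤ a := by
      rcases Nat.even_or_odd ℓ with he | ho
      · rw [he.neg_one_pow]; linarith
      · rw [ho.neg_one_pow]; linarith
    have h2 : a ^ ℓ * (1 + t) = a ^ ℓ + a := by rw [mul_add, mul_one, hat]
    rw [h2]
    linarith [h1]
  have hCpos : (0:ℝ) ≤ (C:ℝ) := Nat.cast_nonneg C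
  have hpow : (C:ℝ)^g ≤ (a ^ ℓ * (1+t))^g := pow_le_pow_left₀ hCpos hCle g
  have hnpos : (0:ℝ) < (n:ℝ)^n := by positivity
  have hn0 : (n:ℝ) ≠ 0 := by positivity
  have hagl : (a ^ ℓ)^g = a ^ n := by
    rw [← pow_mul]
    congr 1
    rw [Nat.mul_comm]
    exact hgl
  have e1 : a / n ≤ Real.exp (-(1/(n:ℝ))) := by
    have h1 := Real.add_one_le_exp (-(1/(n:ℝ)))
    have h2 : a / n = 1 - 1/n := by rw [ha]; field_simp
    rw [h2]; linarith
  have e1' : (a/(n:ℝ))^n ≤ Real.exp (-1) := by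
    calc (a/(n:ℝ))^n ≤ (Real.exp (-(1/(n:ℝ))))^n :=
          pow_le_pow_left₀ (by positivity) e1 n
      _ = Real.exp ((n:ℕ) * (-(1/(n:ℝ)))) := (Real.exp_nat_mul _ n).symm
      _ = Real.exp (-1) := by congr 1; field_simp
  have e2 : (1+t)^g ≤ Real.exp ((g:ℝ) * t) := by
    calc (1+t)^g ≤ (Real.exp t)^g :=
          pow_le_pow_left₀ (by positivity) (by linarith [Real.add_one_le_exp t]) g
      _ = Real.exp ((g:ℕ) * t) := (Real.exp_nat_mul _ g).symm
  have hln : ((ℓ:ℝ)) * (g:ℝ) = (n:ℝ) := by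
    have : ℓ * g = n := by rw [Nat.mul_comm]; exact hgl
    exact_mod_cast congrArg (Nat.cast : ℕ → ℝ) this
  have hl0 : (ℓ:ℝ) ≠ 0 := by
    have h : 0 < ℓ := lt_of_lt_of_le two_pos hl
    positivity
  have hexp : (n:ℝ) / ((ℓ:ℝ) * a ^ (ℓ - 1)) = (g:ℝ) * t := by
    rw [ht, ← hln]
    have hpow0 : a ^ (ℓ-1) ≠ 0 := by positivity
    field_simp
  rw [hP]
  push_cast
  rw [hexp]
  calc (C:ℝ)^g / (n:ℝ)^n ≤ (a^ℓ * (1+t))^g / (n:ℝ)^n := by gcongr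
    _ = (a/(n:ℝ))^n * (1+t)^g := by
        rw [mul_pow, hagl, div_pow]
        ring
    _ ≤ Real.exp (-1) * Real.exp ((g:ℝ)*t) :=
        mul_le_mul e1' e2 (by positivity) (Real.exp_nonneg _)
    _ = Real.exp (-1 + (g:ℝ)*t) := (Real.exp_add _ _).symm
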